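/- arXiv:1509.06604 — 4 statements merged into one kernel-verified Lean document; each statement's English description precedes it below -/
import Mathlib

section
/- For d ≥ 2 and positive reals λ_1 ≥ ... ≥ λ_d, if λ_1 / (λ_1⋯λ_d)^{1/d} ≤ min(1 + 1/d, (1 - 1/d)^{-1/(d-1)}), then for every i one has |λ_i / (λ_1⋯λ_d)^{1/d} − 1| ≤ 1/d. -/
theorem stmt_2 (d : ℕ) (hd : 2 ≤ d) (lam : Fin d → ℝ)
    (hpos : ∀ i, 0 < lam i)
    (hmono : ∀ i j : Fin d, i ≤ j → lam j ≤ lam i)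
    (h : lam ⟨0, by omega⟩ / (∏ i, lam i) ^ ((1 : ℝ) / d) ≤
      min (1 + 1 / (d : ℝ)) ((1 - 1 / (d : ℝ)) ^ (-(1 / ((d : ℝ) - 1))))) :
    ∀ i : Fin d, |lam i / (∏ j, lam j) ^ ((1 : ℝ) / d) - 1| ≤ 1 / (d : ℝ) := by
  intro i
  have hP : 0 < ∏ j, lam j := Finset.prod_pos (fun j _ => hpos j)
  set P := ∏ j, lam j with hPdef
  set G := P ^ ((1:ℝ)/d) with hGdef
  have hG : 0 < G := Real.rpow_pos_of_pos hP _
  have hdR : (2:ℝ) ≤ (d:ℝ) := by exact_mod_cast hd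
  have hdne : (d:ℝ) ≠ 0 := by linarith
  have hGd : G ^ d = P := by
    rw [hGdef, ← Real.rpow_natCast (P ^ ((1:ℝ)/d)) d, ← Real.rpow_mul hP.le]
    rw [one_div, inv_mul_cancel₀ hdne, Real.rpow_one]
  have hprod : ∏ j, lam j / G = 1 := by
    rw [Finset.prod_div_distrib, Finset.prod_const, Finset.card_univ,
      Fintype.card_fin, hGd, div_self hP.ne']
  set Z : Fin d := ⟨0, by omega⟩ with hZdef
  have h0 : ∀ j : Fin d, lam j / G ≤ lam Z / G := fun j =>
    div_le_div_of_nonneg_right (hmono Z j (Fin.mk_le_of_le_val (Nat.zero_le _))) hG.le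
  have hμ0pos : 0 < lam Z / G := div_pos (hpos Z) hG
  have hupper : lam Z / G ≤ 1 + 1/(d:ℝ) := le_trans h (min_le_left _ _)
  have hbase : (0:ℝ) < 1 - 1/(d:ℝ) := by
    have : 1/(d:ℝ) ≤ 1/2 := by
      apply div_le_div_of_nonneg_left (by norm_num) (by norm_num) hdR
    linarith
  have hμ0' : lam Z / G ≤ (1 - 1/(d:ℝ)) ^ (-(1 / ((d:ℝ) - 1))) :=
    le_trans h (min_le_right _ _)
  set L : Fin d := ⟨d - 1, by omega⟩ with hLdef
  -- product over erase L
  have hmul : lam L / G * ∏ j ∈ Finset.univ.erase L, lam j / G = 1 :=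
    (Finset.mul_prod_erase Finset.univ (fun j => lam j / G) (Finset.mem_univ L)).trans hprod
  have hcard : (Finset.univ.erase L).card = d - 1 := by
    rw [Finset.card_erase_of_mem (Finset.mem_univ L), Finset.card_univ, Fintype.card_fin]
  have herasepos : 0 < ∏ j ∈ Finset.univ.erase L, lam j / G :=
    Finset.prod_pos (fun j _ => div_pos (hpos j) hG)
  have hErle : ∏ j ∈ Finset.univ.erase L, lam j / G ≤ (lam Z / G) ^ (d - 1) := by
    calc ∏ j ∈ Finset.univ.erase L, lam j / G
        ≤ ∏ j ∈ Finset.univ.erase L, lam Z / G :=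
          Finset.prod_le_prod (fun j _ => (div_pos (hpos j) hG).le) (fun j _ => h0 j)
      _ = (lam Z / G) ^ (d - 1) := by rw [Finset.prod_const, hcard]
  have hd1ne : ((d:ℝ) - 1) ≠ 0 := by linarith
  have hpowle : (lam Z / G) ^ (d - 1) ≤ (1 - 1/(d:ℝ))⁻¹ := by
    calc (lam Z / G) ^ (d - 1)
        ≤ ((1 - 1/(d:ℝ)) ^ (-(1 / ((d:ℝ) - 1)))) ^ (d - 1) :=
          pow_le_pow_left₀ hμ0pos.le hμ0' _
      _ = (1 - 1/(d:ℝ))⁻¹ := by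
          rw [← Real.rpow_natCast ((1 - 1/(d:ℝ)) ^ (-(1 / ((d:ℝ) - 1)))) (d-1),
            ← Real.rpow_mul hbase.le]
          have hcast : ((d - 1 : ℕ) : ℝ) = (d:ℝ) - 1 := by
            push_cast [Nat.cast_sub (by omega : 1 ≤ d)]; ring
          rw [hcast]
          rw [show -(1 / ((d:ℝ) - 1)) * ((d:ℝ) - 1) = -1 by
            field_simp]
          rw [Real.rpow_neg_one]
  have hEr : ∏ j ∈ Finset.univ.erase L, lam j / G ≤ (1 - 1/(d:ℝ))⁻¹ :=
    le_trans hErle hpowle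
  have hμL : 1 - 1/(d:ℝ) ≤ lam L / G := by
    have hLeq : lam L / G = (∏ j ∈ Finset.univ.erase L, lam j / G)⁻¹ :=
      eq_inv_of_mul_eq_one_left hmul
    have hinv := inv_anti₀ herasepos hEr
    rw [inv_inv] at hinv
    rw [hLeq]; exact hinv
  have hlowi : 1 - 1/(d:ℝ) ≤ lam i / G := by
    have : lam L ≤ lam i := hmono i L (by
      rw [Fin.le_def]
      exact Nat.le_sub_one_of_lt i.isLt)
    calc 1 - 1/(d:ℝ) ≤ lam L / G := hμL
      _ ≤ lam i / G := div_le_div_of_nonneg_right this hG.le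
  have huppi : lam i / G ≤ 1 + 1/(d:ℝ) := le_trans (h0 i) hupper
  rw [abs_le]
  constructor <;> linarith
end

section
/- Let A be a symmetric positive definite d×d real matrix (d ≥ 2) and let q_i, q_j be unit vectors with q_i · q_j = −1/d. If ‖A / (det A)^{1/d} − I‖ ≤ 1/d in the operator 2-norm, then q_iᵀ A q_j ≤ 0. -/
noncomputable def specNorm {d : ℕ} (A : Matrix (Fin d) (Fin d) ℝ) : ℝ :=
  ‖LinearMap.toContinuousLinearMap (Matrix.toEuclideanLin A)‖

open Matrix in
theorem stmt_3 (d : ℕ) (hd : 2 ≤ d) (A : Matrix (Fin d) (Fin d) ℝ)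
    (hA : A.PosDef) (qi qj : Fin d → ℝ)
    (hqi : qi ⬝ᵥ qi = 1) (hqj : qj ⬝ᵥ qj = 1) (hij : qi ⬝ᵥ qj = -(1 / (d : ℝ)))
    (h : specNorm ((A.det ^ ((1 : ℝ) / d))⁻¹ • A - 1) ≤ 1 / (d : ℝ)) :
    qi ⬝ᵥ A.mulVec qj ≤ 0 := by
  set c : ℝ := A.det ^ ((1 : ℝ) / d) with hc_def
  have hc : 0 < c := Real.rpow_pos_of_pos hA.det_pos _
  set B : Matrix (Fin d) (Fin d) ℝ := c⁻¹ • A - 1 with hB_def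
  -- norms of qi, qj in Euclidean space
  set x : EuclideanSpace ℝ (Fin d) := (WithLp.equiv 2 _).symm qi with hx
  set y : EuclideanSpace ℝ (Fin d) := (WithLp.equiv 2 _).symm qj with hy
  have hxn : ‖x‖ = 1 := by
    have : ‖x‖ = Real.sqrt (inner ℝ x x : ℝ) := norm_eq_sqrt_real_inner x
    rw [this, hx, WithLp.equiv_symm_apply, EuclideanSpace.inner_toLp_toLp]
    simp [hqi]
  have hyn : ‖y‖ = 1 := by
    have : ‖y‖ = Real.sqrt (inner ℝ y y : ℝ) := norm_eq_sqrt_real_inner y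
    rw [this, hy, WithLp.equiv_symm_apply, EuclideanSpace.inner_toLp_toLp]
    simp [hqj]
  have key : qi ⬝ᵥ B.mulVec qj ≤ 1 / (d : ℝ) := by
    have h1 : qi ⬝ᵥ B.mulVec qj =
        (inner ℝ x (LinearMap.toContinuousLinearMap (Matrix.toEuclideanLin B) y) : ℝ) := by
      rw [LinearMap.coe_toContinuousLinearMap', hx, hy,
        WithLp.equiv_symm_apply, Matrix.toEuclideanLin_toLp,
        EuclideanSpace.inner_toLp_toLp]
      simp [dotProduct, mul_comm]
    calc qi ⬝ᵥ B.mulVec qj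
        = (inner ℝ x (LinearMap.toContinuousLinearMap (Matrix.toEuclideanLin B) y) : ℝ) := h1
      _ ≤ ‖x‖ * ‖LinearMap.toContinuousLinearMap (Matrix.toEuclideanLin B) y‖ :=
          real_inner_le_norm _ _
      _ ≤ ‖x‖ * (specNorm B * ‖y‖) := by
          gcongr
          exact (LinearMap.toContinuousLinearMap (Matrix.toEuclideanLin B)).le_opNorm y
      _ = specNorm B := by rw [hxn, hyn]; ring
      _ ≤ 1 / (d : ℝ) := h
  have hsplit : c⁻¹ • A = B + 1 := by rw [hB_def, sub_add_cancel]
  have hmv : A.mulVec qj = c • (B + 1).mulVec qj := by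
    rw [← hsplit, ← Matrix.smul_mulVec, smul_smul, mul_inv_cancel₀ hc.ne', one_smul]
  rw [hmv, dotProduct_smul, Matrix.add_mulVec, Matrix.one_mulVec,
    dotProduct_add, hij]
  have : qi ⬝ᵥ B.mulVec qj + -(1 / (d : ℝ)) ≤ 0 := by linarith
  exact mul_nonpos_of_nonneg_of_nonpos hc.le this
end

section
/- If A is a symmetric positive definite d×d matrix satisfying ‖A‖ / (det A)^{1/d} ≤ min(1 + 1/d, (1 − 1/d)^{-1/(d-1)}), then ‖A/(det A)^{1/d} − I‖ ≤ 1/d. -/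
open Matrix

lemma specNorm_smul {d : ℕ} (c : ℝ) (A : Matrix (Fin d) (Fin d) ℝ) :
    specNorm (c • A) = |c| * specNorm A := by
  unfold specNorm
  rw [_root_.map_smul, _root_.map_smul]
  have hns := norm_smul (α := ℝ)
    (β := EuclideanSpace ℝ (Fin d) →L[ℝ] EuclideanSpace ℝ (Fin d)) c
    (LinearMap.toContinuousLinearMap (toEuclideanLin A))
  rw [hns, Real.norm_eq_abs]

lemma abs_le_specNorm {d : ℕ} (A : Matrix (Fin d) (Fin d) ℝ) (μ : ℝ)
    (v : EuclideanSpace ℝ (Fin d)) (hv : ‖v‖ = 1)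
    (hmul : A *ᵥ ⇑v = μ • ⇑v) : |μ| ≤ specNorm A := by
  have h1 : LinearMap.toContinuousLinearMap (Matrix.toEuclideanLin A) v = μ • v := by
    show (WithLp.equiv 2 _).symm (A *ᵥ (WithLp.equiv 2 _) v) = μ • v
    rw [show (WithLp.equiv 2 (Fin d → ℝ)) v = ⇑v from rfl, hmul]
    rfl
  have h2 := (LinearMap.toContinuousLinearMap (Matrix.toEuclideanLin A)).le_opNorm v
  rw [h1, norm_smul, hv, Real.norm_eq_abs, mul_one, mul_one] at h2
  exact h2

lemma specNorm_le_of_eigenbasis {d : ℕ} (M : Matrix (Fin d) (Fin d) ℝ)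
    (b : OrthonormalBasis (Fin d) ℝ (EuclideanSpace ℝ (Fin d))) (μ : Fin d → ℝ)
    (hmul : ∀ i, M *ᵥ ⇑(b i) = μ i • ⇑(b i)) {c : ℝ} (hc : 0 ≤ c)
    (hμ : ∀ i, |μ i| ≤ c) : specNorm M ≤ c := by
  refine ContinuousLinearMap.opNorm_le_bound _ hc fun x => ?_
  set T := LinearMap.toContinuousLinearMap (Matrix.toEuclideanLin M) with hTdef
  have hT : ∀ i, T (b i) = μ i • b i := by
    intro i
    show (WithLp.equiv 2 _).symm (M *ᵥ (WithLp.equiv 2 _) (b i)) = μ i • b i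
    rw [show (WithLp.equiv 2 (Fin d → ℝ)) (b i) = ⇑(b i) from rfl, hmul]
    rfl
  have hx : x = ∑ i, b.repr x i • b i := (b.sum_repr x).symm
  have hTx : T x = ∑ i, (μ i * b.repr x i) • b i := by
    conv_lhs => rw [hx]
    rw [map_sum]
    refine Finset.sum_congr rfl fun i _ => ?_
    rw [_root_.map_smul, hT i, smul_smul, mul_comm]
  have hnx : ‖x‖ ^ 2 = ∑ i, (b.repr x i) ^ 2 := by
    rw [← real_inner_self_eq_norm_sq]
    conv_lhs => rw [hx]
    rw [b.orthonormal.inner_sum]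
    simp [sq]
  have hnTx : ‖T x‖ ^ 2 = ∑ i, (μ i * b.repr x i) ^ 2 := by
    rw [← real_inner_self_eq_norm_sq, hTx, b.orthonormal.inner_sum]
    simp [sq]
  have key : ‖T x‖ ^ 2 ≤ (c * ‖x‖) ^ 2 := by
    rw [hnTx, mul_pow, hnx, Finset.mul_sum]
    refine Finset.sum_le_sum fun i _ => ?_
    rw [mul_pow]
    have := hμ i
    have h0 : μ i ^ 2 ≤ c ^ 2 := by nlinarith [abs_nonneg (μ i), sq_abs (μ i)]
    nlinarith [sq_nonneg (b.repr x i)]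
  nlinarith [norm_nonneg (T x), norm_nonneg x, mul_nonneg hc (norm_nonneg x)]

theorem stmt_6 (d : ℕ) (hd : 2 ≤ d) (A : Matrix (Fin d) (Fin d) ℝ)
    (hA : A.PosDef)
    (h : specNorm A / A.det ^ ((1 : ℝ) / d) ≤
      min (1 + 1 / (d : ℝ)) ((1 - 1 / (d : ℝ)) ^ (-(1 / ((d : ℝ) - 1))))) :
    specNorm ((A.det ^ ((1 : ℝ) / d))⁻¹ • A - 1) ≤ 1 / (d : ℝ) := by
  classical
  have hd2 : (2:ℝ) ≤ (d:ℝ) := by exact_mod_cast hd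
  have hdpos : (0:ℝ) < d := by linarith
  have hinvd : 1/(d:ℝ) ≤ 1/2 := by
    rw [div_le_div_iff₀ hdpos (by norm_num)]; linarith
  have h1d : 0 < 1 - 1/(d:ℝ) := by linarith
  have hdetpos : 0 < A.det := hA.det_pos
  set c := A.det ^ ((1:ℝ)/(d:ℝ)) with hcdef
  have hcpos : 0 < c := Real.rpow_pos_of_pos hdetpos _
  set B := c⁻¹ • A with hBdef
  have hBherm : B.IsHermitian := by
    unfold Matrix.IsHermitian
    rw [hBdef, conjTranspose_smul, hA.1.eq, star_trivial]
  have hBpd : B.PosDef := by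
    refine ⟨hBherm, fun x hx => ?_⟩
    have h2 := hA.2 hx
    rw [hBdef]
    have h3 := mul_pos (inv_pos.mpr hcpos) h2
    simpa [Finsupp.mul_sum, mul_left_comm, mul_assoc] using h3
  have hcd : c ^ (d:ℕ) = A.det := by
    rw [hcdef, ← Real.rpow_natCast (A.det ^ ((1:ℝ)/(d:ℝ))) d, ← Real.rpow_mul hdetpos.le,
      one_div_mul_cancel hdpos.ne', Real.rpow_one]
  have hdetB : B.det = 1 := by
    rw [hBdef, det_smul, Fintype.card_fin, inv_pow, hcd, inv_mul_cancel₀ hdetpos.ne']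
  set lam := hBherm.eigenvalues with hlamdef
  set b := hBherm.eigenvectorBasis with hbdef
  have hlampos : ∀ i, 0 < lam i := fun i => hBpd.eigenvalues_pos i
  have hprod : ∏ i, lam i = 1 := by
    have h3 := hBherm.det_eq_prod_eigenvalues
    rw [hdetB] at h3
    simpa using h3.symm
  have hsB : specNorm B = specNorm A / c := by
    rw [hBdef, specNorm_smul, abs_of_pos (inv_pos.mpr hcpos), div_eq_mul_inv, mul_comm]
  set m2 := (1 - 1/(d:ℝ)) ^ (-(1/((d:ℝ)-1))) with hm2def
  have hBle : specNorm B ≤ min (1 + 1/(d:ℝ)) m2 := by rw [hsB]; exact h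
  have hlamle : ∀ i, lam i ≤ specNorm B := by
    intro i
    have h1 := abs_le_specNorm B (lam i) (b i) (b.orthonormal.1 i)
      (hBherm.mulVec_eigenvectorBasis i)
    exact (le_abs_self _).trans h1
  have hlamup : ∀ i, lam i ≤ 1 + 1/(d:ℝ) :=
    fun i => (hlamle i).trans (hBle.trans (min_le_left _ _))
  have hm2pow : m2 ^ (d-1) = (1 - 1/(d:ℝ))⁻¹ := by
    rw [hm2def, ← Real.rpow_natCast ((1 - 1/(d:ℝ)) ^ (-(1/((d:ℝ)-1)))) (d-1),
      ← Real.rpow_mul h1d.le]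
    have hcast : ((d-1 : ℕ) : ℝ) = (d:ℝ) - 1 := by
      have : 1 ≤ d := by omega
      push_cast [Nat.cast_sub this]
      ring
    rw [hcast, neg_mul, one_div_mul_cancel (by linarith : (d:ℝ) - 1 ≠ 0),
      Real.rpow_neg h1d.le, Real.rpow_one]
  have hlamlo : ∀ j, 1 - 1/(d:ℝ) ≤ lam j := by
    intro j
    have hcard : (Finset.univ.erase j).card = d - 1 := by
      rw [Finset.card_erase_of_mem (Finset.mem_univ j), Finset.card_univ, Fintype.card_fin]
    have hP : ∏ i ∈ Finset.univ.erase j, lam i ≤ (1 - 1/(d:ℝ))⁻¹ := by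
      calc ∏ i ∈ Finset.univ.erase j, lam i
          ≤ ∏ _i ∈ Finset.univ.erase j, m2 :=
            Finset.prod_le_prod (fun i _ => (hlampos i).le)
              (fun i _ => (hlamle i).trans (hBle.trans (min_le_right _ _)))
        _ = m2 ^ (d-1) := by rw [Finset.prod_const, hcard]
        _ = (1 - 1/(d:ℝ))⁻¹ := hm2pow
    have hPpos : 0 < ∏ i ∈ Finset.univ.erase j, lam i :=
      Finset.prod_pos fun i _ => hlampos i
    have hmul : lam j * ∏ i ∈ Finset.univ.erase j, lam i = 1 := by
      rw [Finset.mul_prod_erase _ _ (Finset.mem_univ j), hprod]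
    have hinv : (1 - 1/(d:ℝ)) * ((1 - 1/(d:ℝ))⁻¹) = 1 := mul_inv_cancel₀ h1d.ne'
    nlinarith [mul_le_mul_of_nonneg_left hP h1d.le, hlampos j]
  have hmulM : ∀ i, (B - 1) *ᵥ ⇑(b i) = (lam i - 1) • ⇑(b i) := by
    intro i
    rw [sub_mulVec, one_mulVec, hBherm.mulVec_eigenvectorBasis i, sub_smul, one_smul]
  refine specNorm_le_of_eigenbasis _ b (fun i => lam i - 1) hmulM (by positivity) ?_
  intro i
  rw [abs_le]
  exact ⟨by linarith [hlamlo i], by linarith [hlamup i]⟩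
end

section
/- Let A be a symmetric positive definite d×d matrix and q_i, q_j unit vectors with q_i · q_j = −1/d. If every eigenvalue λ of A satisfies (1 − 1/d)(det A)^{1/d} ≤ λ ≤ (1 + 1/d)(det A)^{1/d}, then q_iᵀ A q_j ≤ 0. -/
open Matrix in
theorem stmt_19 (d : ℕ) (hd : 2 ≤ d) (A : Matrix (Fin d) (Fin d) ℝ)
    (hA : A.PosDef) (qi qj : Fin d → ℝ)
    (hqi : qi ⬝ᵥ qi = 1) (hqj : qj ⬝ᵥ qj = 1) (hij : qi ⬝ᵥ qj = -(1 / (d : ℝ)))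
    (heig : ∀ μ ∈ spectrum ℝ A,
      (1 - 1 / (d : ℝ)) * A.det ^ ((1 : ℝ) / d) ≤ μ ∧
        μ ≤ (1 + 1 / (d : ℝ)) * A.det ^ ((1 : ℝ) / d)) :
    qi ⬝ᵥ A.mulVec qj ≤ 0 := by
  classical
  have hAH : A.IsHermitian := hA.1
  have hd0 : (0:ℝ) < (d:ℝ) := by exact_mod_cast (by omega : 0 < d)
  set g : ℝ := A.det ^ ((1:ℝ)/d) with hgdef
  have hg : 0 < g := Real.rpow_pos_of_pos hA.det_pos _
  set U : Matrix (Fin d) (Fin d) ℝ := (hAH.eigenvectorUnitary : Matrix (Fin d) (Fin d) ℝ)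
    with hUdef
  have hUU : U * star U = 1 := (Matrix.mem_unitaryGroup_iff).mp (hAH.eigenvectorUnitary).2
  set E : Fin d → ℝ := hAH.eigenvalues with hEdef
  set x : Fin d → ℝ := star U *ᵥ qi with hxdef
  set y : Fin d → ℝ := star U *ᵥ qj with hydef
  -- a helper for orthogonality
  have key : ∀ v w : Fin d → ℝ, (star U *ᵥ v) ⬝ᵥ (star U *ᵥ w) = v ⬝ᵥ w := by
    intro v w
    have hsU : star U = Uᵀ := by
      ext i j; simp [Matrix.star_apply]
    rw [hsU, Matrix.mulVec_transpose, ← Matrix.dotProduct_mulVec, Matrix.mulVec_mulVec]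
    rw [← hsU, hUU, Matrix.one_mulVec]
  have hxy : x ⬝ᵥ y = -(1/(d:ℝ)) := by rw [hxdef, hydef, key, hij]
  have hxx : x ⬝ᵥ x = 1 := by rw [hxdef, key, hqi]
  have hyy : y ⬝ᵥ y = 1 := by rw [hydef, key, hqj]
  -- main identity
  have hmain : qi ⬝ᵥ A.mulVec qj = ∑ k, E k * (x k * y k) := by
    conv_lhs => rw [hAH.spectral_theorem, Unitary.conjStarAlgAut_apply]
    rw [← Matrix.mulVec_mulVec, ← Matrix.mulVec_mulVec, Matrix.dotProduct_mulVec]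
    have hvm : qi ᵥ* U = x := by
      rw [hxdef]
      ext k
      simp [Matrix.vecMul, Matrix.mulVec, dotProduct, Matrix.star_apply, mul_comm]
    rw [show ((hAH.eigenvectorUnitary : Matrix (Fin d) (Fin d) ℝ)) = U from rfl, hvm]
    rw [← hydef]
    simp [dotProduct, Matrix.mulVec_diagonal, hEdef, mul_comm, mul_assoc, mul_left_comm]
  -- eigenvalue bounds
  have hEb : ∀ k, |E k - g| ≤ g / d := by
    intro k
    have hb := heig (E k) (hAH.eigenvalues_mem_spectrum_real k)
    have hgd : g / (d:ℝ) = (1/(d:ℝ)) * g := by ring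
    rw [abs_le, hgd]
    constructor <;> nlinarith [hb.1, hb.2]
  -- Cauchy-Schwarz
  have hcs : ∑ k, |x k| * |y k| ≤ 1 := by
    have h1 := Finset.sum_mul_sq_le_sq_mul_sq Finset.univ (fun k => |x k|) (fun k => |y k|)
    have hx2 : ∑ k, |x k| ^ 2 = 1 := by
      simpa [sq_abs, sq, dotProduct] using hxx
    have hy2 : ∑ k, |y k| ^ 2 = 1 := by
      simpa [sq_abs, sq, dotProduct] using hyy
    rw [hx2, hy2, one_mul] at h1
    have hnn : (0:ℝ) ≤ ∑ k, |x k| * |y k| :=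
      Finset.sum_nonneg fun k _ => mul_nonneg (abs_nonneg _) (abs_nonneg _)
    nlinarith
  -- bound the perturbation term
  have hpert : ∑ k, (E k - g) * (x k * y k) ≤ g / d := by
    calc ∑ k, (E k - g) * (x k * y k)
        ≤ ∑ k, (g/d) * (|x k| * |y k|) := by
          apply Finset.sum_le_sum
          intro k _
          calc (E k - g) * (x k * y k) ≤ |(E k - g) * (x k * y k)| := le_abs_self _
            _ = |E k - g| * (|x k| * |y k|) := by rw [abs_mul, abs_mul]
            _ ≤ (g/d) * (|x k| * |y k|) :=
                mul_le_mul_of_nonneg_right (hEb k)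
                  (mul_nonneg (abs_nonneg _) (abs_nonneg _))
      _ = (g/d) * ∑ k, |x k| * |y k| := by rw [Finset.mul_sum]
      _ ≤ (g/d) * 1 := by
          apply mul_le_mul_of_nonneg_left hcs (le_of_lt (div_pos hg hd0))
      _ = g / d := mul_one _
  -- put it together
  have hsum : ∑ k, E k * (x k * y k)
      = (∑ k, (E k - g) * (x k * y k)) + g * (x ⬝ᵥ y) := by
    rw [dotProduct, Finset.mul_sum, ← Finset.sum_add_distrib]
    apply Finset.sum_congr rfl
    intro k _; ring
  rw [hmain, hsum, hxy]
  have : g * -(1/(d:ℝ)) = -(g/d) := by ring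
  rw [this]
  linarith
end
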